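/- Conversely, in the series composition of G₁, G₂, G₃ through bridge sets B₁, B₂ as above, any p-linking from S ⊆ V(G₁) \ B₁ to T ⊆ V(G₃) \ B₂ in the composite graph decomposes into a p-linking from S to some B₁' ⊆ B₁ in G₁, a p-linking from B₁' to some B₂' ⊆ B₂ in G₂, and a p-linking from B₂' to T in G₃. -/

import Mathlib

/-- An `r`-linking from `S` to `T`: `r` pairwise vertex-disjoint simple directed paths,
each starting in `S` and ending in `T`. -/
def IsLinking {V : Type*} (E : V → V → Prop) (S T : Set V) (r : ℕ)
    (P : Fin r → List V) : Prop :=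
  (∀ i, (P i) ≠ [] ∧ (P i).Chain' E ∧ (P i).Nodup ∧
    (∃ a ∈ S, (P i).head? = some a) ∧ (∃ b ∈ T, (P i).getLast? = some b)) ∧
  ∀ i j, i ≠ j → ∀ v, v ∈ P i → v ∉ P j

section Aux
variable {V : Type*} {V₁ V₂ V₃ : Set V} {E₁ E₂ E₃ : V → V → Prop}

theorem aux3 (hE₁ : ∀ a b, E₁ a b → a ∈ V₁ ∧ b ∈ V₁)
    (hE₂ : ∀ a b, E₂ a b → a ∈ V₂ ∧ b ∈ V₂)
    (hE₃ : ∀ a b, E₃ a b → a ∈ V₃ ∧ b ∈ V₃)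
    (h13 : V₁ ∩ V₃ = ∅)
    (hB₂out : ∀ w ∈ V₂ ∩ V₃, ∀ x, ¬ E₂ w x) :
    ∀ l : List V, l.Chain' (fun a b => E₁ a b ∨ E₂ a b ∨ E₃ a b) →
      ∀ u, l.head? = some u → u ∈ V₃ → l.Chain' E₃
  | [] => by simp
  | [u] => by intros; exact List.isChain_singleton _
  | u :: v :: rest => by
    intro hch w hw hw3
    simp only [List.head?_cons, Option.some.injEq] at hw
    subst hw
    rw [List.Chain', List.isChain_cons_cons] at hch
    obtain ⟨he, hch⟩ := hch
    have huv : E₃ u v := by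
      rcases he with h | h | h
      · exact absurd (Set.eq_empty_iff_forall_notMem.mp h13 u) (by simp [(hE₁ _ _ h).1, hw3])
      · exact absurd h (hB₂out u ⟨(hE₂ _ _ h).1, hw3⟩ v)
      · exact h
    exact List.isChain_cons_cons.mpr ⟨huv,
      aux3 hE₁ hE₂ hE₃ h13 hB₂out (v :: rest) hch v rfl (hE₃ _ _ huv).2⟩

theorem aux2 (hE₁ : ∀ a b, E₁ a b → a ∈ V₁ ∧ b ∈ V₁)
    (hE₂ : ∀ a b, E₂ a b → a ∈ V₂ ∧ b ∈ V₂)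
    (hE₃ : ∀ a b, E₃ a b → a ∈ V₃ ∧ b ∈ V₃)
    (h13 : V₁ ∩ V₃ = ∅)
    (hB₁out : ∀ w ∈ V₁ ∩ V₂, ∀ x, ¬ E₁ w x)
    (hB₂out : ∀ w ∈ V₂ ∩ V₃, ∀ x, ¬ E₂ w x) :
    ∀ l : List V, l.Chain' (fun a b => E₁ a b ∨ E₂ a b ∨ E₃ a b) →
      ∀ u, l.head? = some u → u ∈ V₂ → u ∉ V₃ →
      ∀ t, l.getLast? = some t → t ∈ V₃ →
      ∃ M c C, l = M ++ c :: C ∧ (M ++ [c]).Chain' E₂ ∧ c ∈ V₂ ∧ c ∈ V₃ ∧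
        (c :: C).Chain' E₃
  | [] => by simp
  | [u] => by
    intro _ w hw hw2 hw3 t ht ht3
    simp only [List.head?_cons, Option.some.injEq] at hw
    simp only [List.getLast?_singleton, Option.some.injEq] at ht
    subst hw; subst ht
    exact absurd ht3 hw3
  | u :: v :: rest => by
    intro hch w hw hw2 hw3 t ht ht3
    simp only [List.head?_cons, Option.some.injEq] at hw
    subst hw
    rw [List.Chain', List.isChain_cons_cons] at hch
    obtain ⟨he, hch⟩ := hch
    have huv : E₂ u v := by
      rcases he with h | h | h
      · exact absurd h (hB₁out u ⟨(hE₁ _ _ h).1, hw2⟩ v)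
      · exact h
      · exact absurd hw3 (by simp [(hE₃ _ _ h).1])
    have hv2 : v ∈ V₂ := (hE₂ _ _ huv).2
    by_cases hv3 : v ∈ V₃
    · exact ⟨[u], v, rest, rfl, by simp [List.Chain', huv], hv2, hv3,
        aux3 hE₁ hE₂ hE₃ h13 hB₂out (v :: rest) hch v rfl hv3⟩
    · rw [List.getLast?_cons_cons] at ht
      obtain ⟨M, c, C, heq, hch2, hc2, hc3, hch3⟩ :=
        aux2 hE₁ hE₂ hE₃ h13 hB₁out hB₂out (v :: rest) hch v rfl hv2 hv3 t ht ht3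
      refine ⟨u :: M, c, C, by simp [heq], ?_, hc2, hc3, hch3⟩
      rw [List.cons_append]
      refine List.isChain_cons.mpr ⟨?_, hch2⟩
      intro y hy
      cases M <;> simp_all

theorem aux1 (hE₁ : ∀ a b, E₁ a b → a ∈ V₁ ∧ b ∈ V₁)
    (hE₂ : ∀ a b, E₂ a b → a ∈ V₂ ∧ b ∈ V₂)
    (hE₃ : ∀ a b, E₃ a b → a ∈ V₃ ∧ b ∈ V₃)
    (h13 : V₁ ∩ V₃ = ∅)
    (hB₁out : ∀ w ∈ V₁ ∩ V₂, ∀ x, ¬ E₁ w x)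
    (hB₂out : ∀ w ∈ V₂ ∩ V₃, ∀ x, ¬ E₂ w x) :
    ∀ l : List V, l.Chain' (fun a b => E₁ a b ∨ E₂ a b ∨ E₃ a b) →
      ∀ u, l.head? = some u → u ∈ V₁ → u ∉ V₂ →
      ∀ t, l.getLast? = some t → t ∈ V₃ →
      ∃ A b M c C, l = A ++ b :: (M ++ c :: C) ∧ (A ++ [b]).Chain' E₁ ∧
        b ∈ V₁ ∧ b ∈ V₂ ∧ (b :: (M ++ [c])).Chain' E₂ ∧ c ∈ V₂ ∧ c ∈ V₃ ∧
        (c :: C).Chain' E₃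
  | [] => by simp
  | [u] => by
    intro _ w hw hw1 hw2 t ht ht3
    simp only [List.head?_cons, Option.some.injEq] at hw
    simp only [List.getLast?_singleton, Option.some.injEq] at ht
    subst hw; subst ht
    exact absurd (Set.eq_empty_iff_forall_notMem.mp h13 u (by exact ⟨hw1, ht3⟩)) (fun h => h)
  | u :: v :: rest => by
    intro hch w hw hw1 hw2 t ht ht3
    simp only [List.head?_cons, Option.some.injEq] at hw
    subst hw
    rw [List.Chain', List.isChain_cons_cons] at hch
    obtain ⟨he, hch⟩ := hch
    have huv : E₁ u v := by
      rcases he with h | h | h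
      · exact h
      · exact absurd (hE₂ _ _ h).1 hw2
      · exact absurd (Set.eq_empty_iff_forall_notMem.mp h13 u) (by simp [hw1, (hE₃ _ _ h).1])
    have hv1 : v ∈ V₁ := (hE₁ _ _ huv).2
    rw [List.getLast?_cons_cons] at ht
    by_cases hv2 : v ∈ V₂
    · obtain ⟨M₀, c, C, heq, hch2, hc2, hc3, hch3⟩ :=
        aux2 hE₁ hE₂ hE₃ h13 hB₁out hB₂out (v :: rest) hch v rfl hv2
          (fun h => absurd (Set.eq_empty_iff_forall_notMem.mp h13 v) (by simp [hv1, h]))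
          t ht ht3
      cases M₀ with
      | nil =>
        simp only [List.nil_append, List.cons.injEq] at heq
        exact absurd (Set.eq_empty_iff_forall_notMem.mp h13 v)
          (by simp [hv1, heq.1 ▸ hc3])
      | cons b' M =>
        simp only [List.cons_append, List.cons.injEq] at heq
        obtain ⟨hb', hrest⟩ := heq
        subst hb'
        refine ⟨[u], v, M, c, C, by simp [hrest], by simp [List.Chain', huv], hv1, hv2, ?_, hc2, hc3, hch3⟩
        simpa using hch2
    · obtain ⟨A, b, M, c, C, heq, hch1, hb1, hb2, hch2, hc2, hc3, hch3⟩ :=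
        aux1 hE₁ hE₂ hE₃ h13 hB₁out hB₂out (v :: rest) hch v rfl hv1 hv2 t ht ht3
      refine ⟨u :: A, b, M, c, C, by simp [heq], ?_, hb1, hb2, hch2, hc2, hc3, hch3⟩
      rw [List.cons_append]
      refine List.isChain_cons.mpr ⟨?_, hch1⟩
      intro y hy
      cases A <;> simp_all

end Aux

/-- in the series composition of `G₁`, `G₂`, `G₃` through bridge sets
`B₁ = V₁ ∩ V₂`, `B₂ = V₂ ∩ V₃`, any `p`-linking from `S ⊆ V₁ \ B₁` to `T ⊆ V₃ \ B₂`
in the composite graph decomposes into a `p`-linking from `S` to bridge vertices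
`b₁ i ∈ B₁` in `G₁`, a matching `p`-linking from the `b₁ i` to bridge vertices
`b₂ i ∈ B₂` in `G₂`, and a matching `p`-linking from the `b₂ i` to `T` in `G₃`. -/
theorem stmt_13 {V : Type*} (V₁ V₂ V₃ : Set V) (E₁ E₂ E₃ : V → V → Prop)
    (hE₁ : ∀ a b, E₁ a b → a ∈ V₁ ∧ b ∈ V₁)
    (hE₂ : ∀ a b, E₂ a b → a ∈ V₂ ∧ b ∈ V₂)
    (hE₃ : ∀ a b, E₃ a b → a ∈ V₃ ∧ b ∈ V₃)
    (h13 : V₁ ∩ V₃ = ∅)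
    (hB₁out : ∀ w ∈ V₁ ∩ V₂, ∀ x, ¬ E₁ w x)
    (hB₁in : ∀ w ∈ V₁ ∩ V₂, ∀ x, ¬ E₂ x w)
    (hB₂out : ∀ w ∈ V₂ ∩ V₃, ∀ x, ¬ E₂ w x)
    (hB₂in : ∀ w ∈ V₂ ∩ V₃, ∀ x, ¬ E₃ x w)
    (p : ℕ) (S T : Set V) (hS : S ⊆ V₁ \ V₂) (hT : T ⊆ V₃ \ V₂)
    (P : Fin p → List V)
    (hL : IsLinking (fun a b => E₁ a b ∨ E₂ a b ∨ E₃ a b) S T p P) :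
    ∃ (b₁ b₂ : Fin p → V) (P₁ P₂ P₃ : Fin p → List V),
      (∀ i, b₁ i ∈ V₁ ∩ V₂) ∧ (∀ i, b₂ i ∈ V₂ ∩ V₃) ∧
      IsLinking E₁ S (Set.range b₁) p P₁ ∧
      (∀ i, (P₁ i).getLast? = some (b₁ i)) ∧
      IsLinking E₂ (Set.range b₁) (Set.range b₂) p P₂ ∧
      (∀ i, (P₂ i).head? = some (b₁ i)) ∧
      (∀ i, (P₂ i).getLast? = some (b₂ i)) ∧
      IsLinking E₃ (Set.range b₂) T p P₃ ∧
      (∀ i, (P₃ i).head? = some (b₂ i)) := by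
  obtain ⟨hpath, hdisj⟩ := hL
  have hdec : ∀ i, ∃ A b M c C, P i = A ++ b :: (M ++ c :: C) ∧ (A ++ [b]).Chain' E₁ ∧
      b ∈ V₁ ∧ b ∈ V₂ ∧ (b :: (M ++ [c])).Chain' E₂ ∧ c ∈ V₂ ∧ c ∈ V₃ ∧
      (c :: C).Chain' E₃ := by
    intro i
    obtain ⟨hne, hch, hnd, ⟨a, haS, ha⟩, ⟨t, htT, ht⟩⟩ := hpath i
    exact aux1 hE₁ hE₂ hE₃ h13 hB₁out hB₂out (P i) hch a ha (hS haS).1 (hS haS).2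
      t ht (hT htT).1
  choose A b M c C heq hch1 hb1 hb2 hch2 hc2 hc3 hch3 using hdec
  have heq1 : ∀ i, P i = (A i ++ [b i]) ++ (M i ++ c i :: C i) := by
    intro i; rw [heq i]; simp
  have heq3 : ∀ i, P i = (A i ++ b i :: M i) ++ (c i :: C i) := by
    intro i; rw [heq i]; simp
  have sub1 : ∀ i, List.Sublist (A i ++ [b i]) (P i) := by
    intro i; rw [heq1 i]; exact (List.prefix_append _ _).sublist
  have sub2 : ∀ i, List.Sublist (b i :: (M i ++ [c i])) (P i) := by
    intro i; rw [heq i]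
    refine List.Sublist.trans ?_ (List.sublist_append_right (A i) _)
    have : b i :: (M i ++ [c i]) ++ C i = b i :: (M i ++ c i :: C i) := by simp
    rw [← this]
    exact (List.prefix_append _ _).sublist
  have sub3 : ∀ i, List.Sublist (c i :: C i) (P i) := by
    intro i; rw [heq3 i]; exact List.sublist_append_right _ _
  have hnd : ∀ i, (P i).Nodup := fun i => (hpath i).2.2.1
  have hlast1 : ∀ i, (A i ++ [b i]).getLast? = some (b i) := fun i => List.getLast?_concat
  have hhead1 : ∀ i, (A i ++ [b i]).head? = (P i).head? := by
    intro i; rw [heq1 i]; exact (List.head?_append_of_ne_nil _ (by simp)).symm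
  have hlast3 : ∀ i, (c i :: C i).getLast? = (P i).getLast? := by
    intro i; rw [heq3 i]; exact (List.getLast?_append_of_ne_nil _ (by simp)).symm
  refine ⟨b, c, fun i => A i ++ [b i], fun i => b i :: (M i ++ [c i]), fun i => c i :: C i,
    fun i => ⟨hb1 i, hb2 i⟩, fun i => ⟨hc2 i, hc3 i⟩, ?_, fun i => hlast1 i, ?_,
    fun i => rfl, ?_, ?_, fun i => rfl⟩
  · constructor
    · intro i
      obtain ⟨_, _, _, ⟨a, haS, ha⟩, _⟩ := hpath i
      exact ⟨by simp, hch1 i, (sub1 i).nodup (hnd i), ⟨a, haS, (hhead1 i).trans ha⟩,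
        ⟨b i, ⟨i, rfl⟩, hlast1 i⟩⟩
    · intro i j hij v hv h
      exact hdisj i j hij v ((sub1 i).subset hv) ((sub1 j).subset h)
  · constructor
    · intro i
      refine ⟨by simp, hch2 i, (sub2 i).nodup (hnd i), ⟨b i, ⟨i, rfl⟩, rfl⟩,
        ⟨c i, ⟨i, rfl⟩, ?_⟩⟩
      show (b i :: M i ++ [c i]).getLast? = some (c i)
      exact List.getLast?_concat
    · intro i j hij v hv h
      exact hdisj i j hij v ((sub2 i).subset hv) ((sub2 j).subset h)
  · intro i
    show (b i :: M i ++ [c i]).getLast? = some (c i)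
    exact List.getLast?_concat
  · constructor
    · intro i
      obtain ⟨_, _, _, _, ⟨t, htT, ht⟩⟩ := hpath i
      exact ⟨by simp, hch3 i, (sub3 i).nodup (hnd i), ⟨c i, ⟨i, rfl⟩, rfl⟩,
        ⟨t, htT, (hlast3 i).trans ht⟩⟩
    · intro i j hij v hv h
      exact hdisj i j hij v ((sub3 i).subset hv) ((sub3 j).subset h)
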